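/- Let u : ℝ² → ℝ be radial, continuous, u ∈ L⁴(ℝ²), and let V₁(x) = h_u(|x|)²/|x|² for x ≠ 0, V₁(0) = 0. Then V₁ is differentiable at 0 with ∇V₁(0) = 0, and away from the origin ∂V₁/∂xᵢ (x) = (2xᵢ h_u(|x|)/|x|⁴)(|x|² u(x)² − h_u(|x|)) = O(|x|) as |x| → 0; hence V₁ ∈ C¹(ℝ²). -/

import Mathlib

open MeasureTheory Real Filter Asymptotics Topology

noncomputable abbrev R2 := EuclideanSpace ℝ (Fin 2)

namespace Stmt7Aux

variable (u : R2 → ℝ)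

noncomputable def w (s : ℝ) : ℝ :=
  u (Real.sqrt |s| • EuclideanSpace.single (0 : Fin 2) (1 : ℝ)) ^ 2 / 2

noncomputable def H (t : ℝ) : ℝ := ∫ s in (0:ℝ)..t, w u s

noncomputable def A (t : ℝ) : ℝ := if t = 0 then w u 0 else H u t / t

noncomputable def D (t : ℝ) : ℝ := 2 * A u t * w u t - A u t ^ 2

noncomputable def phi (t : ℝ) : ℝ := (H u t) ^ 2 / t

variable (hcont : Continuous u)
include hcont

lemma w_cont : Continuous (w u) := by
  refine ((hcont.comp ?_).pow 2).div_const 2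
  exact ((continuous_abs.sqrt)).smul continuous_const

lemma H_hasDerivAt (t : ℝ) : HasDerivAt (H u) (w u t) t :=
  intervalIntegral.integral_hasDerivAt_right
    ((w_cont u hcont).intervalIntegrable 0 t)
    ((w_cont u hcont).stronglyMeasurable.stronglyMeasurableAtFilter)
    (w_cont u hcont).continuousAt

lemma H_cont : Continuous (H u) := by
  have h : Differentiable ℝ (H u) := fun t => (H_hasDerivAt u hcont t).differentiableAt
  exact h.continuous

omit hcont in
lemma H_zero : H u 0 = 0 := intervalIntegral.integral_same

lemma A_cont : Continuous (A u) := by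
  rw [continuous_iff_continuousAt]
  intro t
  rcases eq_or_ne t 0 with rfl | ht
  · have hslope := (H_hasDerivAt u hcont 0)
    rw [hasDerivAt_iff_tendsto_slope] at hslope
    have hA0 : A u 0 = w u 0 := if_pos rfl
    unfold ContinuousAt
    rw [hA0, ← nhdsNE_sup_pure (0:ℝ), tendsto_sup]
    constructor
    · refine hslope.congr' ?_
      filter_upwards [self_mem_nhdsWithin] with s hs
      have hs' : s ≠ 0 := hs
      simp [slope_def_field, A, if_neg hs', H_zero u]
    · simpa [A] using tendsto_pure_nhds (A u) 0
  · have h1 : ContinuousAt (fun s => H u s / s) t :=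
      ((H_cont u hcont).continuousAt).div continuousAt_id ht
    refine h1.congr ?_
    filter_upwards [isOpen_ne.mem_nhds ht] with s hs
    simp [A, if_neg hs]

omit hcont in
lemma A_zero : A u 0 = w u 0 := if_pos rfl

lemma phi_hasDerivAt (t : ℝ) : HasDerivAt (phi u) (D u t) t := by
  rcases eq_or_ne t 0 with rfl | ht
  · have hD0 : D u 0 = w u 0 ^ 2 := by simp only [D, A_zero u]; ring
    rw [hD0, hasDerivAt_iff_tendsto_slope]
    have hA : Tendsto (fun s => A u s ^ 2) (𝓝[≠] (0:ℝ)) (𝓝 (w u 0 ^ 2)) := by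
      have := (((A_cont u hcont).tendsto 0).pow 2)
      rw [A_zero u] at this
      exact this.mono_left nhdsWithin_le_nhds
    refine hA.congr' ?_
    filter_upwards [self_mem_nhdsWithin] with s hs
    have hs' : (s : ℝ) ≠ 0 := hs
    have hsq : (H u s / s) ^ 2 = H u s ^ 2 / (s * s) := by rw [div_pow, pow_two s]
    rw [slope_def_field]
    simp only [phi, A, if_neg hs', H_zero u, hsq, sub_zero]
    norm_num [div_div]
  · have h1 : HasDerivAt (fun s => (H u s) ^ 2) (2 * H u t * w u t) t := by
      have := (H_hasDerivAt u hcont t).pow 2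
      simp at this
      exact this
    have h2 : HasDerivAt (fun s => H u s ^ 2 / s) _ t := h1.div (hasDerivAt_id t) ht
    convert h2 using 1
    · rfl
    simp only [D, A, if_neg ht]
    field_simp
  
lemma D_cont : Continuous (D u) :=
  ((continuous_const.mul (A_cont u hcont)).mul (w_cont u hcont)).sub
    ((A_cont u hcont).pow 2)

lemma phi_contDiff : ContDiff ℝ 1 (phi u) := by
  rw [contDiff_one_iff_deriv]
  refine ⟨fun t => (phi_hasDerivAt u hcont t).differentiableAt, ?_⟩
  have : deriv (phi u) = D u := funext fun t => (phi_hasDerivAt u hcont t).deriv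
  rw [this]
  exact D_cont u hcont

end Stmt7Aux

open Stmt7Aux

set_option maxHeartbeats 800000 in
set_option synthInstance.maxHeartbeats 400000 in
/-- for radial continuous `u ∈ L⁴(ℝ²)`, the potential
`V₁(x) = h_u(|x|)²/|x|²` (equal to `0` at `x = 0`) is differentiable at the
origin with zero derivative, its partial derivatives away from the origin are
`∂ᵢV₁(x) = (2xᵢ h_u(|x|)/|x|⁴)(|x|² u(x)² − h_u(|x|))`, the derivative is
`O(|x|)` near the origin, and `V₁ ∈ C¹(ℝ²)`. -/
theorem stmt7 (f : ℝ → ℝ) (u : R2 → ℝ) (hrad : ∀ x, u x = f ‖x‖)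
    (hcont : Continuous u) (hL4 : Integrable (fun x => u x ^ 4)) :
    HasFDerivAt (fun x : R2 => (∫ r in (0:ℝ)..‖x‖, r * f r ^ 2) ^ 2 / ‖x‖ ^ 2)
        (0 : R2 →L[ℝ] ℝ) 0 ∧
      (∀ x : R2, x ≠ 0 → ∀ i : Fin 2,
        fderiv ℝ (fun x : R2 => (∫ r in (0:ℝ)..‖x‖, r * f r ^ 2) ^ 2 / ‖x‖ ^ 2) x
            (EuclideanSpace.single i 1) =
          2 * x i * (∫ r in (0:ℝ)..‖x‖, r * f r ^ 2) / ‖x‖ ^ 4 *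
            (‖x‖ ^ 2 * u x ^ 2 - ∫ r in (0:ℝ)..‖x‖, r * f r ^ 2)) ∧
      (fun x : R2 =>
          fderiv ℝ (fun x : R2 => (∫ r in (0:ℝ)..‖x‖, r * f r ^ 2) ^ 2 / ‖x‖ ^ 2) x)
        =O[nhds (0 : R2)] (fun x : R2 => ‖x‖) ∧
      ContDiff ℝ 1 (fun x : R2 => (∫ r in (0:ℝ)..‖x‖, r * f r ^ 2) ^ 2 / ‖x‖ ^ 2) := by
  -- `w u t = f (√|t|)² / 2`
  have hwf : ∀ t : ℝ, w u t = f (Real.sqrt |t|) ^ 2 / 2 := by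
    intro t
    simp only [w, hrad, norm_smul, EuclideanSpace.norm_single, norm_one, mul_one,
      Real.norm_eq_abs, abs_of_nonneg (Real.sqrt_nonneg _)]
  -- substitution : `∫₀ˢ r f(r)² dr = H u (s²)` for `s ≥ 0`
  have hsub : ∀ s : ℝ, 0 ≤ s → (∫ r in (0:ℝ)..s, r * f r ^ 2) = H u (s ^ 2) := by
    intro s hs
    have key : (∫ r in (0:ℝ)..s, (2 * r) • (w u (r ^ 2))) = ∫ x in ((0:ℝ)^2)..(s^2), w u x :=
      intervalIntegral.integral_comp_smul_deriv
        (fun x _ => by simpa using hasDerivAt_pow 2 x)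
        ((continuous_const.mul continuous_id).continuousOn)
        (w_cont u hcont)
    have h0 : ((0:ℝ))^2 = 0 := by norm_num
    rw [h0] at key
    rw [show H u (s ^ 2) = ∫ x in (0:ℝ)..s^2, w u x from rfl, ← key]
    refine intervalIntegral.integral_congr ?_
    intro r hr
    rw [Set.uIcc_of_le hs] at hr
    have hr0 : 0 ≤ r := hr.1
    have : Real.sqrt |r ^ 2| = r := by
      rw [abs_of_nonneg (sq_nonneg r), Real.sqrt_sq hr0]
    show r * f r ^ 2 = (2 * r) • w u (r ^ 2)
    rw [smul_eq_mul, hwf, this]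
    ring
  -- the function equals `phi u ∘ (‖·‖²)`
  set V : R2 → ℝ := fun x : R2 => (∫ r in (0:ℝ)..‖x‖, r * f r ^ 2) ^ 2 / ‖x‖ ^ 2 with hV
  have hVeq : V = fun x : R2 => phi u (‖x‖ ^ 2) := by
    funext x
    simp only [hV, phi, hsub ‖x‖ (norm_nonneg x)]
  -- derivative of `V` at every point
  have hVfd : ∀ x : R2, HasFDerivAt V (D u (‖x‖ ^ 2) • (2 • (innerSL ℝ x))) x := by
    intro x
    rw [hVeq]
    exact (phi_hasDerivAt u hcont (‖x‖ ^ 2)).comp_hasFDerivAt x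
      (hasStrictFDerivAt_norm_sq x).hasFDerivAt
  -- value of `w u (‖x‖²)`
  have hwx : ∀ x : R2, w u (‖x‖ ^ 2) = u x ^ 2 / 2 := by
    intro x
    rw [hwf, abs_of_nonneg (sq_nonneg _), Real.sqrt_sq (norm_nonneg x), hrad]
  refine ⟨?_, ?_, ?_, ?_⟩
  · have h0 := hVfd 0
    have hz : ((innerSL ℝ) (0 : R2)) = 0 := map_zero _
    rw [hz] at h0
    simpa using h0
  · intro x hx i
    have ht : (‖x‖ : ℝ) ^ 2 ≠ 0 := pow_ne_zero 2 (norm_ne_zero_iff.mpr hx)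
    have hfd := (hVfd x).fderiv
    rw [hfd]
    have happ : (D u (‖x‖ ^ 2) • (2 • (innerSL ℝ x))) (EuclideanSpace.single i 1) =
        D u (‖x‖ ^ 2) * (2 * x i) := by
      simp [ContinuousLinearMap.smul_apply, innerSL_apply_apply, real_inner_comm,
        EuclideanSpace.inner_single_right]
      try ring
    rw [happ, hsub ‖x‖ (norm_nonneg x)]
    simp only [D, A, if_neg ht, hwx]
    have hn : (‖x‖ : ℝ) ≠ 0 := norm_ne_zero_iff.mpr hx
    field_simp
  · have h1 : (fun x : R2 => D u (‖x‖ ^ 2)) =O[nhds (0:R2)] (fun _ : R2 => (1:ℝ)) := by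
      have : Tendsto (fun x : R2 => D u (‖x‖ ^ 2)) (nhds 0) (𝓝 (D u 0)) := by
        have := (D_cont u hcont).comp ((continuous_norm (E := R2)).pow 2)
        simpa [Function.comp_def] using this.tendsto 0
      exact this.isBigO_one ℝ
    have h2 : (fun x : R2 => ((2 • (innerSL ℝ x)) : R2 →L[ℝ] ℝ)) =O[nhds (0:R2)]
        (fun x : R2 => ‖x‖) := by
      refine IsBigO.of_bound 2 ?_
      filter_upwards with x
      have h2x : ‖((2 • (innerSL ℝ x)) : R2 →L[ℝ] ℝ)‖ ≤ 2 * ‖x‖ := by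
        rw [two_smul]
        calc ‖(innerSL ℝ x) + (innerSL ℝ x)‖ ≤ ‖innerSL ℝ x‖ + ‖innerSL ℝ x‖ := norm_add_le _ _
        _ = 2 * ‖x‖ := by rw [innerSL_apply_norm]; ring
      simpa [norm_norm] using h2x
    have h3 := h1.smul h2
    have heq : (fun x : R2 => fderiv ℝ V x) =
        fun x : R2 => D u (‖x‖ ^ 2) • ((2 • (innerSL ℝ x)) : R2 →L[ℝ] ℝ) :=
      funext fun x => (hVfd x).fderiv
    rw [heq]
    simpa using h3
  · rw [hVeq]
    exact (phi_contDiff u hcont).comp (contDiff_norm_sq ℝ)
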